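/- For L > 1, let α_ℓ > 0 for ℓ = 1,…,L sum to one and let ρ ≥ 1. If either γ_1 ≥ γ_2 ≥ ρ or 1 ≤ γ_1 ≤ γ_2 ≤ ρ, then I_0(γ_1 | ρ) ≥ I_0(γ_2 | ρ) ≥ I_0(ρ | ρ) = 1. -/

import Mathlib

open Real

lemma holder_sum {L : ℕ} (α : Fin L → ℝ) (hα : ∀ i, 0 < α i) (x y a : ℝ)
    (ha0 : 0 ≤ a) (ha1 : a ≤ 1) :
    ∑ i, α i ^ (a * x + (1 - a) * y) ≤ (∑ i, α i ^ x) ^ a * (∑ i, α i ^ y) ^ (1 - a) := by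
  have hS : ∀ e : ℝ, 0 ≤ ∑ i, α i ^ e := fun e =>
    Finset.sum_nonneg fun i _ => (rpow_pos_of_pos (hα i) e).le
  rcases eq_or_lt_of_le ha0 with h0 | h0
  · simp [← h0]
  rcases eq_or_lt_of_le ha1 with h1 | h1
  · simp [h1]
  have hpq : Real.HolderConjugate (1/a) (1/(1-a)) := by
    rw [Real.holderConjugate_iff]
    constructor
    · exact one_lt_one_div h0 h1
    · rw [one_div, one_div, inv_inv, inv_inv]; ring
  calc ∑ i, α i ^ (a * x + (1 - a) * y)
      = ∑ i, α i ^ (a * x) * α i ^ ((1 - a) * y) := by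
        refine Finset.sum_congr rfl fun i _ => ?_
        rw [← Real.rpow_add (hα i)]
    _ ≤ (∑ i, (α i ^ (a * x)) ^ (1/a)) ^ (1/(1/a)) *
        (∑ i, (α i ^ ((1 - a) * y)) ^ (1/(1-a))) ^ (1/(1/(1-a))) :=
        Real.inner_le_Lp_mul_Lq_of_nonneg Finset.univ hpq
          (fun i _ => (rpow_pos_of_pos (hα i) _).le)
          (fun i _ => (rpow_pos_of_pos (hα i) _).le)
    _ = (∑ i, α i ^ x) ^ a * (∑ i, α i ^ y) ^ (1 - a) := by
        rw [one_div_one_div, one_div_one_div]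
        congr 1
        · congr 1
          refine Finset.sum_congr rfl fun i _ => ?_
          rw [← Real.rpow_mul (hα i).le]
          congr 1
          field_simp
        · congr 1
          refine Finset.sum_congr rfl fun i _ => ?_
          rw [← Real.rpow_mul (hα i).le]
          congr 1
          have : 1 - a ≠ 0 := by linarith
          field_simp

lemma interp_sum {L : ℕ} (hL : 0 < L) (α : Fin L → ℝ) (hα : ∀ i, 0 < α i)
    (ρ x y s t a b : ℝ) (hρ : 0 ≤ ρ)
    (ha0 : 0 ≤ a) (ha1 : a ≤ 1) (hb0 : 0 ≤ b) (hb1 : b ≤ 1)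
    (hs : s = a * x + (1 - a) * y) (ht : t = b * x + (1 - b) * y) :
    (∑ i, α i ^ s) * (∑ i, α i ^ t) ^ ρ ≤
      (∑ i, α i ^ x) ^ (a + ρ * b) * (∑ i, α i ^ y) ^ ((1 - a) + ρ * (1 - b)) := by
  have : Nonempty (Fin L) := Fin.pos_iff_nonempty.mp hL
  have hSpos : ∀ e : ℝ, 0 < ∑ i, α i ^ e := fun e =>
    Finset.sum_pos (fun i _ => rpow_pos_of_pos (hα i) e) Finset.univ_nonempty
  have h1 : (∑ i, α i ^ s) ≤ (∑ i, α i ^ x) ^ a * (∑ i, α i ^ y) ^ (1 - a) := by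
    rw [hs]; exact holder_sum α hα x y a ha0 ha1
  have h2 : (∑ i, α i ^ t) ^ ρ ≤ ((∑ i, α i ^ x) ^ b * (∑ i, α i ^ y) ^ (1 - b)) ^ ρ := by
    refine rpow_le_rpow (hSpos t).le ?_ hρ
    rw [ht]; exact holder_sum α hα x y b hb0 hb1
  calc (∑ i, α i ^ s) * (∑ i, α i ^ t) ^ ρ
      ≤ ((∑ i, α i ^ x) ^ a * (∑ i, α i ^ y) ^ (1 - a)) *
        (((∑ i, α i ^ x) ^ b * (∑ i, α i ^ y) ^ (1 - b)) ^ ρ) := by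
        refine mul_le_mul h1 h2 (rpow_nonneg (hSpos t).le ρ) ?_
        exact mul_nonneg (rpow_nonneg (hSpos x).le _) (rpow_nonneg (hSpos y).le _)
    _ = (∑ i, α i ^ x) ^ (a + ρ * b) * (∑ i, α i ^ y) ^ ((1 - a) + ρ * (1 - b)) := by
        rw [Real.mul_rpow (rpow_nonneg (hSpos x).le b) (rpow_nonneg (hSpos y).le (1-b)),
          ← Real.rpow_mul (hSpos x).le, ← Real.rpow_mul (hSpos y).le,
          mul_mul_mul_comm, ← Real.rpow_add (hSpos x), ← Real.rpow_add (hSpos y)]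
        ring_nf

lemma schurA {L : ℕ} (hL : 0 < L) (α : Fin L → ℝ) (hα : ∀ i, 0 < α i)
    (ρ t t' : ℝ) (hρ : 1 ≤ ρ) (h1 : t ≤ t') (h2 : t' ≤ 2 / (ρ + 1)) :
    (∑ i, α i ^ (2 - ρ * t')) * (∑ i, α i ^ t') ^ ρ ≤
      (∑ i, α i ^ (2 - ρ * t)) * (∑ i, α i ^ t) ^ ρ := by
  have hρ1 : (0:ℝ) < ρ + 1 := by linarith
  have h2' : t' * (ρ + 1) ≤ 2 := (le_div_iff₀ hρ1).mp h2
  have hD : 0 ≤ 2 - (ρ + 1) * t := by nlinarith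
  rcases eq_or_lt_of_le hD with hD0 | hD0
  · have htt : t' = t := by nlinarith
    rw [htt]
  · set D := 2 - (ρ + 1) * t with hDdef
    have hDne : D ≠ 0 := ne_of_gt hD0
    have key := interp_sum hL α hα ρ (2 - ρ * t) t (2 - ρ * t') t'
      ((2 - ρ * t' - t) / D) ((t' - t) / D) (by linarith)
      (div_nonneg (by nlinarith) hD0.le)
      ((div_le_one hD0).mpr (by nlinarith))
      (div_nonneg (by linarith) hD0.le)
      ((div_le_one hD0).mpr (by nlinarith))
      (by field_simp; ring) (by field_simp; ring)
    have e1 : (2 - ρ * t' - t) / D + ρ * ((t' - t) / D) = 1 := by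
      field_simp; ring
    have e2 : (1 - (2 - ρ * t' - t) / D) + ρ * (1 - (t' - t) / D) = ρ := by
      field_simp; ring
    rw [e1, e2, rpow_one] at key
    exact key

lemma schurB {L : ℕ} (hL : 0 < L) (α : Fin L → ℝ) (hα : ∀ i, 0 < α i)
    (ρ t t' : ℝ) (hρ : 1 ≤ ρ) (h1 : 2 / (ρ + 1) ≤ t') (h2 : t' ≤ t) :
    (∑ i, α i ^ (2 - ρ * t')) * (∑ i, α i ^ t') ^ ρ ≤
      (∑ i, α i ^ (2 - ρ * t)) * (∑ i, α i ^ t) ^ ρ := by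
  have hρ1 : (0:ℝ) < ρ + 1 := by linarith
  have h1' : 2 ≤ t' * (ρ + 1) := (div_le_iff₀ hρ1).mp h1
  have hD : 0 ≤ (ρ + 1) * t - 2 := by nlinarith
  rcases eq_or_lt_of_le hD with hD0 | hD0
  · have htt : t' = t := by nlinarith
    rw [htt]
  · set D := (ρ + 1) * t - 2 with hDdef
    have hDne : D ≠ 0 := ne_of_gt hD0
    have key := interp_sum hL α hα ρ t (2 - ρ * t) (2 - ρ * t') t'
      ((ρ * (t - t')) / D) ((t' - (2 - ρ * t)) / D) (by linarith)
      (div_nonneg (by nlinarith) hD0.le)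
      ((div_le_one hD0).mpr (by nlinarith))
      (div_nonneg (by nlinarith) hD0.le)
      ((div_le_one hD0).mpr (by nlinarith))
      (by field_simp; ring) (by field_simp; ring)
    have e1 : (ρ * (t - t')) / D + ρ * ((t' - (2 - ρ * t)) / D) = ρ := by
      field_simp; ring
    have e2 : (1 - (ρ * (t - t')) / D) + ρ * (1 - (t' - (2 - ρ * t)) / D) = 1 := by
      field_simp; ring
    rw [e1, e2, rpow_one] at key
    linarith [key, mul_comm (∑ i, α i ^ t) ((∑ i, α i ^ (2 - ρ * t)) ^ ρ)]

/-- The inefficiency `I₀(γ ∣ ρ)` of designing with exponent `γ` when the true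
rate exponent is `ρ`. -/
noncomputable def I0 {L : ℕ} (α : Fin L → ℝ) (γ ρ : ℝ) : ℝ :=
  (∑ ℓ, (α ℓ) ^ (2 - 2 * ρ / (γ + 1))) * (∑ k, (α k) ^ (2 / (γ + 1))) ^ ρ
    / (∑ k, (α k) ^ (2 / (ρ + 1))) ^ (ρ + 1)

theorem I0_monotone
    (L : ℕ) (hL : 1 < L) (α : Fin L → ℝ) (hα : ∀ ℓ, 0 < α ℓ)
    (hsum : ∑ ℓ, α ℓ = 1) (ρ : ℝ) (hρ : 1 ≤ ρ) (γ₁ γ₂ : ℝ)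
    (hcase : (ρ ≤ γ₂ ∧ γ₂ ≤ γ₁) ∨ (1 ≤ γ₁ ∧ γ₁ ≤ γ₂ ∧ γ₂ ≤ ρ)) :
    I0 α γ₁ ρ ≥ I0 α γ₂ ρ ∧ I0 α γ₂ ρ ≥ I0 α ρ ρ ∧ I0 α ρ ρ = 1 := by
  have hL0 : 0 < L := by omega
  have : Nonempty (Fin L) := Fin.pos_iff_nonempty.mp hL0
  have hSpos : ∀ e : ℝ, 0 < ∑ i, α i ^ e := fun e =>
    Finset.sum_pos (fun i _ => rpow_pos_of_pos (hα i) e) Finset.univ_nonempty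
  have hρ1 : (0:ℝ) < ρ + 1 := by linarith
  have hDpos : 0 < (∑ k, (α k) ^ (2 / (ρ + 1))) ^ (ρ + 1) :=
    rpow_pos_of_pos (hSpos _) _
  have hexp : ∀ γ : ℝ, 2 - 2 * ρ / (γ + 1) = 2 - ρ * (2 / (γ + 1)) := fun γ => by ring
  -- I0 at ρ equals 1
  have h3 : I0 α ρ ρ = 1 := by
    unfold I0
    have he : 2 - 2 * ρ / (ρ + 1) = 2 / (ρ + 1) := by
      field_simp
      ring
    rw [he, show ρ + 1 = 1 + ρ from by ring, Real.rpow_add (hSpos _), rpow_one]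
    exact div_self (mul_ne_zero (hSpos _).ne' (rpow_pos_of_pos (hSpos _) _).ne')
  have hmain : ∀ γ γ' : ℝ,
      (∑ i, α i ^ (2 - ρ * (2 / (γ' + 1)))) * (∑ i, α i ^ (2 / (γ' + 1))) ^ ρ ≤
        (∑ i, α i ^ (2 - ρ * (2 / (γ + 1)))) * (∑ i, α i ^ (2 / (γ + 1))) ^ ρ →
      I0 α γ' ρ ≤ I0 α γ ρ := by
    intro γ γ' h
    unfold I0
    rw [hexp γ, hexp γ']
    exact (div_le_div_iff_of_pos_right hDpos).mpr h
  refine ⟨?_, ?_, h3⟩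
  · rcases hcase with ⟨h2ρ, h21⟩ | ⟨h11, h12, h2ρ⟩
    · -- ρ ≤ γ₂ ≤ γ₁
      have hγ2 : (0:ℝ) < γ₂ + 1 := by linarith
      refine hmain γ₁ γ₂ (schurA hL0 α hα ρ _ _ hρ ?_ ?_)
      · exact div_le_div_of_nonneg_left (by norm_num) hγ2 (by linarith)
      · exact div_le_div_of_nonneg_left (by norm_num) hρ1 (by linarith)
    · -- 1 ≤ γ₁ ≤ γ₂ ≤ ρ
      have hγ1 : (0:ℝ) < γ₁ + 1 := by linarith
      have hγ2 : (0:ℝ) < γ₂ + 1 := by linarith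
      refine hmain γ₁ γ₂ (schurB hL0 α hα ρ _ _ hρ ?_ ?_)
      · exact div_le_div_of_nonneg_left (by norm_num) hγ2 (by linarith)
      · exact div_le_div_of_nonneg_left (by norm_num) hγ1 (by linarith)
  · rcases hcase with ⟨h2ρ, h21⟩ | ⟨h11, h12, h2ρ⟩
    · have hγ2 : (0:ℝ) < γ₂ + 1 := by linarith
      refine hmain γ₂ ρ (schurA hL0 α hα ρ _ _ hρ ?_ le_rfl)
      exact div_le_div_of_nonneg_left (by norm_num) hρ1 (by linarith)
    · have hγ2 : (0:ℝ) < γ₂ + 1 := by linarith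
      refine hmain γ₂ ρ (schurB hL0 α hα ρ _ _ hρ le_rfl ?_)
      exact div_le_div_of_nonneg_left (by norm_num) hγ2 (by linarith)
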